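/- Let n > 2 be odd with smallest prime factor p_min, M_n the circulant Gauss matrix with entries m_j = (1/√n)·e^{(2πi/n)·j²}, and F the cyclic shift circulant circ(0,1,0,...,0). For any product C₁·C₂·...·C_m with each C_i ∈ {M_n, F}, containing a copies of M_n and b copies of F, the resulting circulant matrix circ(x₀,...,x_{n−1}) satisfies: |x₀|² = 1 if a ≡ 0 (mod n) and b ≡ 0 (mod n), and |x₀|² ≤ 1/p_min otherwise. -/

import Mathlib

open Complex Real Matrix

/-- The circulant (shift) matrix whose `(i,j)` entry is `a (j - i)`. -/
def circ {n : ℕ} (a : ZMod n → ℂ) : Matrix (ZMod n) (ZMod n) ℂ :=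
  fun i j => a (j - i)

/-- The circulant Gauss matrix `M_n` with `m_j = (1/√n)·e^{(2πi/n)·j²}`. -/
noncomputable def gaussMatrix (n : ℕ) : Matrix (ZMod n) (ZMod n) ℂ :=
  circ (fun j => (1 / Real.sqrt n : ℂ) *
    Complex.exp (2 * Real.pi * Complex.I * ((j.val : ℂ) ^ 2) / n))

/-- The cyclic shift matrix `F = circ(0,1,0,...,0)`. -/
noncomputable def shiftF (n : ℕ) : Matrix (ZMod n) (ZMod n) ℂ :=
  circ (fun t => if t = 1 then 1 else 0)

set_option linter.unusedSectionVars false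

variable {n : ℕ} [NeZero n]

noncomputable def psi (n : ℕ) (x : ZMod n) : ℂ :=
  Complex.exp (2 * Real.pi * Complex.I * x.val / n)

lemma exp_mod (n : ℕ) [NeZero n] (k : ℕ) :
    Complex.exp (2 * Real.pi * Complex.I * ((k % n : ℕ) : ℂ) / n)
      = Complex.exp (2 * Real.pi * Complex.I * k / n) := by
  have hn : (n : ℂ) ≠ 0 := Nat.cast_ne_zero.mpr (NeZero.ne n)
  have hm : (k : ℂ) = (k % n : ℕ) + (n : ℂ) * (k / n : ℕ) := by
    exact_mod_cast congrArg (Nat.cast : ℕ → ℂ) (Nat.mod_add_div k n).symm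
  rw [hm, show 2 * Real.pi * Complex.I * ((k % n : ℕ) + (n:ℂ) * (k / n : ℕ)) / n
      = 2 * Real.pi * Complex.I * (k % n : ℕ) / n + ((k / n : ℕ) : ℂ) * (2 * Real.pi * Complex.I) by
    field_simp]
  rw [Complex.exp_add]
  have h1 := Complex.exp_int_mul_two_pi_mul_I ((k / n : ℕ) : ℤ)
  rw [Int.cast_natCast] at h1
  rw [h1, mul_one]

lemma psi_natCast (n : ℕ) [NeZero n] (m : ℕ) :
    psi n (m : ZMod n) = Complex.exp (2 * Real.pi * Complex.I * m / n) := by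
  unfold psi; rw [ZMod.val_natCast]; exact exp_mod n m

lemma psi_zero (n : ℕ) [NeZero n] : psi n 0 = 1 := by
  unfold psi; rw [ZMod.val_zero]; simp

lemma psi_add (x y : ZMod n) : psi n (x + y) = psi n x * psi n y := by
  unfold psi
  rw [ZMod.val_add, exp_mod, ← Complex.exp_add]
  congr 1
  push_cast
  ring

lemma psi_nsmul (m : ℕ) (x : ZMod n) : psi n (m • x) = psi n x ^ m := by
  induction m with
  | zero => simp [psi_zero]
  | succ k ih => rw [succ_nsmul, psi_add, ih, pow_succ]

lemma psi_pow (m : ℕ) (x : ZMod n) : psi n x ^ m = psi n ((m : ZMod n) * x) := by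
  rw [← psi_nsmul, nsmul_eq_mul]

lemma psi_neg (x : ZMod n) : psi n (-x) = (psi n x)⁻¹ := by
  have h1 : psi n x * psi n (-x) = 1 := by
    rw [← psi_add, add_neg_cancel, psi_zero]
  exact eq_inv_of_mul_eq_one_right h1

lemma conj_psi (x : ZMod n) : (starRingEnd ℂ) (psi n x) = psi n (-x) := by
  rw [psi_neg]
  unfold psi
  rw [← Complex.exp_conj, ← Complex.exp_neg]
  congr 1
  simp only [map_div₀, _root_.map_mul, Complex.conj_I, Complex.conj_ofReal, _root_.map_ofNat,
    Complex.conj_natCast]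
  ring

lemma abs_psi (x : ZMod n) : ‖psi n x‖ = 1 := by
  have hc : ((Complex.normSq (psi n x) : ℝ) : ℂ) = 1 := by
    rw [← Complex.mul_conj, conj_psi, ← psi_add, add_neg_cancel, psi_zero]
  have h2 : Complex.normSq (psi n x) = 1 := by exact_mod_cast hc
  have h : ‖psi n x‖ ^ 2 = 1 := by rw [Complex.sq_norm, h2]
  nlinarith [norm_nonneg (psi n x)]

lemma psi_eq_one_iff (x : ZMod n) : psi n x = 1 ↔ x = 0 := by
  constructor
  · intro h
    unfold psi at h
    rw [Complex.exp_eq_one_iff] at h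
    obtain ⟨k, hk⟩ := h
    have hπ : (2 * (Real.pi:ℂ) * Complex.I) ≠ 0 := by
      simp [Real.pi_ne_zero, Complex.I_ne_zero]
    have hn : (n : ℂ) ≠ 0 := Nat.cast_ne_zero.mpr (NeZero.ne n)
    have h3 : (x.val : ℂ) = k * n := by
      rw [div_eq_iff hn] at hk
      exact mul_left_cancel₀ hπ (by linear_combination hk)
    have hz : (x.val : ℤ) = k * n := by exact_mod_cast h3
    have hdvd : (n : ℤ) ∣ (x.val : ℤ) := ⟨k, by linarith [hz]⟩
    have hdvd' : n ∣ x.val := Int.ofNat_dvd.mp hdvd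
    have h0 : x.val = 0 := Nat.eq_zero_of_dvd_of_lt hdvd' (ZMod.val_lt x)
    rw [← ZMod.natCast_zmod_val x, h0]
    simp
  · rintro rfl; exact psi_zero n

lemma sum_psi (t : ZMod n) :
    ∑ k : ZMod n, psi n (t * k) = if t = 0 then (n : ℂ) else 0 := by
  by_cases ht : t = 0
  · simp [ht, psi_zero, ZMod.card]
  · rw [if_neg ht]
    have hz : psi n t ≠ 1 := fun h => ht ((psi_eq_one_iff t).mp h)
    have hstep : ∀ k : ZMod n, psi n (t * k) = psi n t ^ k.val := by
      intro k
      rw [psi_pow, ZMod.natCast_zmod_val, mul_comm]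
    simp only [hstep]
    rw [Finset.sum_nbij' (i := fun k => (k : ZMod n).val) (j := fun m => ((m : ℕ) : ZMod n))
      (t := Finset.range n) (g := fun m => psi n t ^ m)]
    · rw [geom_sum_eq hz]
      have : psi n t ^ n = 1 := by
        rw [psi_pow, ZMod.natCast_self, zero_mul, psi_zero]
      rw [this, sub_self, zero_div]
    · intro k _; exact Finset.mem_range.mpr (ZMod.val_lt k)
    · intro m hm; exact Finset.mem_univ _
    · intro k _; exact ZMod.natCast_zmod_val k
    · intro m hm; exact ZMod.val_natCast_of_lt (Finset.mem_range.mp hm)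
    · intro k _; rfl

noncomputable def dft (n : ℕ) [NeZero n] (g : ZMod n → ℂ) (k : ZMod n) : ℂ :=
  ∑ t : ZMod n, g t * psi n (k * t)

lemma sum_dft (g : ZMod n → ℂ) : ∑ k : ZMod n, dft n g k = n * g 0 := by
  unfold dft
  rw [Finset.sum_comm]
  have : ∀ t : ZMod n, ∑ k : ZMod n, g t * psi n (k * t)
      = g t * (if t = 0 then (n:ℂ) else 0) := by
    intro t
    rw [← Finset.mul_sum]
    congr 1
    simp_rw [mul_comm]
    exact sum_psi t
  simp_rw [this]
  simp [mul_comm]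


lemma circ_mul (a b : ZMod n → ℂ) :
    circ a * circ b = circ (fun s => ∑ t : ZMod n, a t * b (s - t)) := by
  ext i j
  rw [Matrix.mul_apply]
  show ∑ k : ZMod n, a (k - i) * b (j - k) = ∑ t : ZMod n, a t * b ((j - i) - t)
  refine Fintype.sum_equiv (Equiv.subRight i) _ _ fun k => ?_
  simp only [Equiv.subRight_apply]
  congr 2
  ring

lemma circ_one : (1 : Matrix (ZMod n) (ZMod n) ℂ) = circ (fun t => if t = 0 then 1 else 0) := by
  ext i j
  rw [Matrix.one_apply]
  show _ = if j - i = 0 then (1:ℂ) else 0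
  simp [sub_eq_zero, eq_comm]

lemma dft_conv (a b : ZMod n → ℂ) (k : ZMod n) :
    dft n (fun s => ∑ t : ZMod n, a t * b (s - t)) k = dft n a k * dft n b k := by
  unfold dft
  have h1 : ∑ s : ZMod n, (∑ t : ZMod n, a t * b (s - t)) * psi n (k * s)
      = ∑ t : ZMod n, ∑ s : ZMod n, a t * b (s - t) * psi n (k * s) := by
    rw [Finset.sum_comm]
    exact Finset.sum_congr rfl fun s _ => Finset.sum_mul _ _ _
  rw [h1, Finset.sum_mul_sum]
  refine Finset.sum_congr rfl fun t _ => ?_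
  refine Fintype.sum_equiv (Equiv.subRight t) _ _ fun s => ?_
  simp only [Equiv.subRight_apply]
  have h2 : k * s = k * t + k * (s - t) := by ring
  rw [h2, psi_add]
  ring

lemma dft_delta (k : ZMod n) : dft n (fun t => if t = 0 then 1 else 0) k = 1 := by
  unfold dft
  rw [Finset.sum_eq_single 0]
  · simp [psi_zero]
  · intro t _ ht; simp [ht]
  · simp

noncomputable def fSym (n : ℕ) : ZMod n → ℂ := fun t => if t = 1 then 1 else 0

lemma shiftF_eq : shiftF n = circ (fSym n) := rfl

lemma dft_fSym (k : ZMod n) : dft n (fSym n) k = psi n k := by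
  unfold dft fSym
  rw [Finset.sum_eq_single 1]
  · simp
  · intro t _ ht; simp [ht]
  · simp

noncomputable def mSym (n : ℕ) : ZMod n → ℂ :=
  fun t => (1 / Real.sqrt n : ℂ) * psi n (t * t)

lemma psi_sq (t : ZMod n) :
    psi n (t * t) = Complex.exp (2 * Real.pi * Complex.I * ((t.val : ℂ) ^ 2) / n) := by
  have h : t * t = ((t.val * t.val : ℕ) : ZMod n) := by
    push_cast [ZMod.natCast_zmod_val]
    ring
  rw [h, psi_natCast]
  congr 1
  push_cast
  ring

lemma gaussMatrix_eq : gaussMatrix n = circ (mSym n) := by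
  funext i j
  show (1 / Real.sqrt n : ℂ) * Complex.exp (2 * Real.pi * Complex.I * (((j - i).val : ℂ) ^ 2) / n)
      = (1 / Real.sqrt n : ℂ) * psi n ((j - i) * (j - i))
  rw [psi_sq]

lemma two_unit (hodd : Odd n) : IsUnit (2 : ZMod n) := by
  rw [show ((2:ZMod n)) = ((2:ℕ) : ZMod n) by push_cast; ring, ZMod.isUnit_iff_coprime]
  exact Nat.coprime_two_left.mpr hodd

lemma quad_conj_sum (hodd : Odd n) (c B : ZMod n) :
    (∑ k : ZMod n, psi n (c * k * k + B * k)) * (∑ l : ZMod n, psi n (-(c * l * l + B * l)))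
      = (n : ℂ) * ∑ r ∈ Finset.univ.filter (fun r : ZMod n => c * r = 0), psi n (B * r) := by
  rw [Finset.sum_mul_sum]
  rw [Finset.sum_comm]
  have key : ∀ l : ZMod n, ∑ k : ZMod n, psi n (c * k * k + B * k) * psi n (-(c * l * l + B * l))
      = ∑ r : ZMod n, psi n (c * r * r + B * r) * psi n ((2 * c * r) * l) := by
    intro l
    refine Fintype.sum_equiv (Equiv.subRight l) _ _ fun k => ?_
    simp only [Equiv.subRight_apply]
    rw [← psi_add, ← psi_add]
    congr 1
    ring
  simp_rw [key]
  rw [Finset.sum_comm]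
  have key2 : ∀ r : ZMod n, ∑ l : ZMod n, psi n (c * r * r + B * r) * psi n ((2 * c * r) * l)
      = psi n (c * r * r + B * r) * (if 2 * c * r = 0 then (n:ℂ) else 0) := by
    intro r
    rw [← Finset.mul_sum, sum_psi]
  simp_rw [key2]
  have h2 : ∀ r : ZMod n, (2 * c * r = 0) ↔ (c * r = 0) := by
    intro r
    constructor
    · intro h
      refine (two_unit hodd).mul_left_cancel ?_
      rw [mul_zero, ← mul_assoc]
      exact h
    · intro h
      rw [mul_assoc, h, mul_zero]
  simp_rw [mul_ite, mul_zero]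
  rw [← Finset.sum_filter, Finset.mul_sum]
  refine Finset.sum_congr ?_ fun r hr => ?_
  · exact Finset.filter_congr fun r _ => by simp [h2 r]
  · rw [Finset.mem_filter] at hr
    have hcr : c * r = 0 := hr.2
    have h3 : c * r * r + B * r = B * r := by rw [hcr]; ring
    rw [h3]
    ring

lemma dft_mSym (hodd : Odd n) (k : ZMod n) :
    dft n (mSym n) k = ((1 / Real.sqrt n : ℂ) * ∑ s : ZMod n, psi n (s * s)) *
      psi n (-((2 : ZMod n)⁻¹ * k * ((2 : ZMod n)⁻¹ * k))) := by
  have h2 : (2 : ZMod n) * (2 : ZMod n)⁻¹ = 1 := ZMod.mul_inv_of_unit _ (two_unit hodd)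
  set u := (2 : ZMod n)⁻¹ with hu
  unfold dft mSym
  have key : ∀ t : ZMod n, (1 / Real.sqrt n : ℂ) * psi n (t * t) * psi n (k * t)
      = (1 / Real.sqrt n : ℂ) * psi n ((t + u * k) * (t + u * k)) * psi n (-(u * k * (u * k))) := by
    intro t
    have harg : (t + u * k) * (t + u * k) + (-(u * k * (u * k))) = t * t + k * t := by
      linear_combination (k * t) * h2
    rw [mul_assoc, mul_assoc, ← psi_add, ← psi_add, harg]
  simp_rw [key]
  rw [show ((1 / Real.sqrt n : ℂ) * ∑ s : ZMod n, psi n (s * s)) * psi n (-(u * k * (u * k)))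
      = ∑ s : ZMod n, (1 / Real.sqrt n : ℂ) * psi n (s * s) * psi n (-(u * k * (u * k))) by
    rw [Finset.mul_sum, Finset.sum_mul]]
  refine Fintype.sum_equiv (Equiv.addRight (u * k)) _ _ fun t => ?_
  simp only [Equiv.coe_addRight]

lemma gauss_norm (hodd : Odd n) :
    (∑ s : ZMod n, psi n (s * s)) * (∑ t : ZMod n, psi n (-(t * t))) = n := by
  have h := quad_conj_sum hodd 1 0
  simp only [one_mul, zero_mul, add_zero] at h
  rw [h]
  have h1 : Finset.univ.filter (fun r : ZMod n => r = 0) = {0} := by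
    ext r; simp
  rw [h1]
  simp [psi_zero]

lemma card_ker_le (c : ZMod n) (hc : c ≠ 0) :
    (Finset.univ.filter (fun r : ZMod n => c * r = 0)).card * n.minFac ≤ n := by
  classical
  set K := AddMonoidHom.ker (AddMonoidHom.mulLeft c) with hK
  have hmem : ∀ r : ZMod n, r ∈ K ↔ c * r = 0 := by
    intro r
    rw [AddMonoidHom.mem_ker]
    exact Iff.rfl
  have hcard : (Finset.univ.filter (fun r : ZMod n => c * r = 0)).card = Nat.card K := by
    rw [Nat.card_eq_fintype_card, Fintype.card_subtype]
    congr 1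
    exact Finset.filter_congr fun r _ => by simp [hmem r]
  have hdvd : Nat.card K ∣ n := by
    have := AddSubgroup.card_addSubgroup_dvd_card K
    rwa [Nat.card_zmod] at this
  have hne : Nat.card K ≠ n := by
    intro h
    have huniv : (Finset.univ.filter (fun r : ZMod n => c * r = 0)) = Finset.univ := by
      apply Finset.eq_univ_of_card
      rw [hcard, h, ZMod.card]
    have h1 : (1 : ZMod n) ∈ Finset.univ.filter (fun r : ZMod n => c * r = 0) := by
      rw [huniv]; exact Finset.mem_univ _
    rw [Finset.mem_filter] at h1
    exact hc (by simpa using h1.2)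
  rw [hcard]
  obtain ⟨e, he⟩ := hdvd
  have hn0 : n ≠ 0 := NeZero.ne n
  have he0 : e ≠ 0 := by rintro rfl; rw [mul_zero] at he; exact hn0 he
  have he1 : e ≠ 1 := by rintro rfl; rw [mul_one] at he; exact hne he.symm
  have hmf : n.minFac ≤ e := Nat.minFac_le_of_dvd (by omega) ⟨Nat.card K, he.trans (Nat.mul_comm _ _)⟩
  calc Nat.card K * n.minFac ≤ Nat.card K * e := Nat.mul_le_mul_left _ hmf
    _ = n := he.symm

lemma gauss_ne_shift (hn2 : 2 < n) : gaussMatrix n ≠ shiftF n := by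
  intro h
  haveI : Fact (1 < n) := ⟨by omega⟩
  have h00 := congrFun (congrFun h 0) 0
  have hL : gaussMatrix n 0 0 = (1 / Real.sqrt n : ℂ) := by
    show (1 / Real.sqrt n : ℂ) * Complex.exp (2 * Real.pi * Complex.I * (((0 - 0 : ZMod n).val : ℂ) ^ 2) / n) = _
    rw [sub_zero, ZMod.val_zero]
    simp
  have hR : shiftF n 0 0 = 0 := by
    show (if (0 - 0 : ZMod n) = 1 then (1:ℂ) else 0) = 0
    rw [sub_zero, if_neg (zero_ne_one)]
  rw [hL, hR] at h00
  have hs : Real.sqrt n > 0 := Real.sqrt_pos.mpr (by positivity)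
  rw [div_eq_zero_iff] at h00
  rcases h00 with h1 | h1
  · exact one_ne_zero h1
  · exact (ne_of_gt hs) (by exact_mod_cast h1)

lemma prod_circ (hn2 : 2 < n) (L : List (Matrix (ZMod n) (ZMod n) ℂ))
    (hL : ∀ C ∈ L, C = gaussMatrix n ∨ C = shiftF n) :
    ∃ g : ZMod n → ℂ, L.prod = circ g ∧ ∀ k, dft n g k
      = dft n (mSym n) k ^ (L.count (gaussMatrix n)) * dft n (fSym n) k ^ (L.count (shiftF n)) := by
  classical
  induction L with
  | nil =>
    refine ⟨_, circ_one, fun k => by simp [dft_delta]⟩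
  | cons C T ih =>
    obtain ⟨g, hg, hdft⟩ := ih (fun D hD => hL D (List.mem_cons_of_mem _ hD))
    rcases hL C List.mem_cons_self with hC | hC
    · refine ⟨fun s => ∑ t : ZMod n, mSym n t * g (s - t), ?_, ?_⟩
      · rw [List.prod_cons, hg, hC, gaussMatrix_eq, circ_mul]
      · intro k
        rw [dft_conv, hdft k, hC]
        rw [List.count_cons_self, List.count_cons_of_ne (gauss_ne_shift hn2)]
        ring
    · refine ⟨fun s => ∑ t : ZMod n, fSym n t * g (s - t), ?_, ?_⟩
      · rw [List.prod_cons, hg, hC, shiftF_eq, circ_mul]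
      · intro k
        rw [dft_conv, hdft k, hC]
        rw [List.count_cons_self, List.count_cons_of_ne (Ne.symm (gauss_ne_shift hn2))]
        ring

theorem product_of_gauss_and_shift (n : ℕ) [NeZero n] (hodd : Odd n) (hn2 : 2 < n)
    (L : List (Matrix (ZMod n) (ZMod n) ℂ))
    (hL : ∀ C ∈ L, C = gaussMatrix n ∨ C = shiftF n)
    (a b : ℕ) (ha : a = L.count (gaussMatrix n)) (hb : b = L.count (shiftF n)) :
    (a % n = 0 ∧ b % n = 0 → ‖L.prod 0 0‖ ^ 2 = 1) ∧
    (¬ (a % n = 0 ∧ b % n = 0) → ‖L.prod 0 0‖ ^ 2 ≤ 1 / n.minFac) := by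
  classical
  obtain ⟨g, hg, hdft⟩ := prod_circ hn2 L hL
  have hnR : (0:ℝ) < n := by positivity
  have hn0 : (n:ℂ) ≠ 0 := Nat.cast_ne_zero.mpr (NeZero.ne n)
  set u : ZMod n := (2 : ZMod n)⁻¹ with hu
  set A : ZMod n := (a : ZMod n) with hA'
  set B : ZMod n := (b : ZMod n) with hB'
  set c : ZMod n := -(A * u * u) with hc'
  set G : ℂ := ∑ s : ZMod n, psi n (s * s) with hG'
  set γ : ℂ := (1 / Real.sqrt n : ℂ) * G with hγ'
  set S : ℂ := ∑ k : ZMod n, psi n (c * k * k + B * k) with hS'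
  have hx0 : L.prod 0 0 = g 0 := by
    rw [hg]; show g (0 - 0) = g 0; rw [sub_zero]
  have hd : ∀ k, dft n g k = γ ^ a * psi n (c * k * k + B * k) := by
    intro k
    rw [hdft k, ← ha, ← hb, dft_mSym hodd k, dft_fSym k, mul_pow, psi_pow a, psi_pow b,
      mul_assoc, ← psi_add]
    rw [show (a : ZMod n) * -(u * k * (u * k)) + (b : ZMod n) * k = c * k * k + B * k by
      rw [hc', hA', hB']; ring]
  have hSe : (n:ℂ) * g 0 = γ ^ a * S := by
    rw [← sum_dft g]
    simp_rw [hd]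
    rw [hS', Finset.mul_sum]
  have hg0 : g 0 = γ ^ a * S / n := by
    rw [eq_div_iff hn0]; linear_combination hSe
  have hGconj : (starRingEnd ℂ) G = ∑ t : ZMod n, psi n (-(t * t)) := by
    rw [hG', map_sum]
    exact Finset.sum_congr rfl fun t _ => conj_psi _
  have hnormG : ‖G‖ ^ 2 = n := by
    have h1 : ((Complex.normSq G : ℝ) : ℂ) = n := by
      rw [← Complex.mul_conj, hGconj]; exact gauss_norm hodd
    rw [Complex.sq_norm]; exact_mod_cast h1
  have habsγ : ‖γ‖ = 1 := by
    have h2 : ‖γ‖ ^ 2 = 1 := by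
      rw [hγ', norm_mul, mul_pow, hnormG]
      have h3 : ‖1 / (Real.sqrt n : ℂ)‖ = 1 / Real.sqrt n := by
        rw [norm_div, norm_one, Complex.norm_real, Real.norm_of_nonneg (Real.sqrt_nonneg _)]
      rw [h3, div_pow, one_pow, Real.sq_sqrt (le_of_lt hnR)]
      field_simp
    nlinarith [norm_nonneg γ]
  have habs : ‖L.prod 0 0‖ = ‖S‖ / n := by
    rw [hx0, hg0, norm_div, norm_mul, norm_pow, habsγ, one_pow, one_mul, Complex.norm_natCast]
  have hdvd : ∀ m : ℕ, ((m : ZMod n) = 0 ↔ m % n = 0) := by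
    intro m
    rw [ZMod.natCast_eq_zero_iff]
    constructor
    · rintro ⟨q, rfl⟩; exact Nat.mul_mod_right n q
    · exact Nat.dvd_of_mod_eq_zero
  have h2u : (2 : ZMod n) * u = 1 := ZMod.mul_inv_of_unit _ (two_unit hodd)
  constructor
  · rintro ⟨ha0, hb0⟩
    have hA0 : A = 0 := (hdvd a).mpr ha0
    have hB0 : B = 0 := (hdvd b).mpr hb0
    have hc0 : c = 0 := by rw [hc', hA0]; ring
    have hSval : S = n := by
      rw [hS']
      have h1 : ∀ k : ZMod n, c * k * k + B * k = 0 := by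
        intro k; rw [hc0, hB0]; ring
      simp_rw [h1, psi_zero]
      simp [ZMod.card]
    rw [habs, hSval, Complex.norm_natCast, div_self (ne_of_gt hnR), one_pow]
  · intro hnot
    have hmf0 : (0:ℝ) < n.minFac := by
      exact_mod_cast Nat.minFac_pos n
    by_cases hA0 : A = 0
    · have ha0 : a % n = 0 := (hdvd a).mp hA0
      have hb0 : b % n ≠ 0 := fun h => hnot ⟨ha0, h⟩
      have hB0 : B ≠ 0 := fun h => hb0 ((hdvd b).mp h)
      have hc0 : c = 0 := by rw [hc', hA0]; ring
      have hSval : S = 0 := by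
        rw [hS']
        have h1 : ∀ k : ZMod n, c * k * k + B * k = B * k := by
          intro k; rw [hc0]; ring
        simp_rw [h1]
        rw [sum_psi B, if_neg hB0]
      rw [habs, hSval]
      simp only [norm_zero, zero_div, ne_eq, OfNat.ofNat_ne_zero, not_false_eq_true,
        zero_pow]
      positivity
    · have hc0 : c ≠ 0 := by
        intro h
        apply hA0
        have h4 : A = -(2 * 2) * c := by
          rw [hc']
          linear_combination (-(A) * (2 * u + 1)) * h2u
        rw [h4, h, mul_zero]
      have hcard := card_ker_le c hc0
      set T : ℂ := ∑ r ∈ Finset.univ.filter (fun r : ZMod n => c * r = 0), psi n (B * r)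
        with hT'
      set d : ℕ := (Finset.univ.filter (fun r : ZMod n => c * r = 0)).card with hd'
      have hconjS : (starRingEnd ℂ) S = ∑ l : ZMod n, psi n (-(c * l * l + B * l)) := by
        rw [hS', map_sum]
        exact Finset.sum_congr rfl fun l _ => conj_psi _
      have hq : S * ((starRingEnd ℂ) S) = (n : ℂ) * T := by
        rw [hconjS, hS', hT']
        exact quad_conj_sum hodd c B
      have hTle : ‖T‖ ≤ d := by
        rw [hT', hd']
        calc ‖∑ r ∈ Finset.univ.filter (fun r : ZMod n => c * r = 0), psi n (B * r)‖
            ≤ ∑ r ∈ Finset.univ.filter (fun r : ZMod n => c * r = 0),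
                ‖psi n (B * r)‖ := norm_sum_le _ _
          _ = ∑ r ∈ Finset.univ.filter (fun r : ZMod n => c * r = 0), 1 :=
              Finset.sum_congr rfl fun r _ => abs_psi _
          _ = _ := by simp
      have hnormS : ‖S‖ ^ 2 ≤ (n : ℝ) * d := by
        have h1 : ((Complex.normSq S : ℝ) : ℂ) = (n : ℂ) * T := by
          rw [← Complex.mul_conj]; exact hq
        have h2 : Complex.normSq S = (n : ℝ) * ‖T‖ := by
          have := congrArg (‖·‖) h1
          rwa [Complex.norm_real, Real.norm_of_nonneg (Complex.normSq_nonneg S), norm_mul,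
            Complex.norm_natCast] at this
        rw [Complex.sq_norm, h2]
        exact mul_le_mul_of_nonneg_left hTle (le_of_lt hnR)
      have hdmf : (d : ℝ) * n.minFac ≤ n := by exact_mod_cast hcard
      rw [habs, div_pow]
      rw [div_le_div_iff₀ (pow_pos hnR 2) hmf0]
      have hd0 : (0:ℝ) ≤ d := Nat.cast_nonneg d
      nlinarith [mul_le_mul_of_nonneg_left hdmf (le_of_lt hnR),
        mul_le_mul_of_nonneg_right hnormS (le_of_lt hmf0)]
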